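/- If g_1, …, g_n are i.i.d. standard Gumbel random variables (with CDF F(x) = exp(-exp(-x))) and π ∈ Δ^{n-1} with all π_j > 0, then P(argmax_j (log π_j + g_j) = k) = π_k for each k. -/

import Mathlib

open MeasureTheory Filter Topology ProbabilityTheory Set

/-- The standard Gumbel CDF as a Stieltjes function. -/
noncomputable def gumbelSF : StieltjesFunction ℝ where
  toFun x := Real.exp (-Real.exp (-x))
  mono' := fun a b hab =>
    Real.exp_le_exp.2 (neg_le_neg (Real.exp_le_exp.2 (neg_le_neg hab)))
  right_continuous' := fun x =>
    (Continuous.continuousAt (by continuity)).continuousWithinAt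

lemma gumbelSF_apply (x : ℝ) : gumbelSF x = Real.exp (-Real.exp (-x)) := rfl

lemma gumbelSF_continuous : Continuous gumbelSF := by
  show Continuous fun x : ℝ => Real.exp (-Real.exp (-x))
  continuity

lemma gumbelSF_tendsto_atBot : Tendsto gumbelSF atBot (𝓝 0) := by
  have h2 : Tendsto (fun x : ℝ => Real.exp (-x)) atBot atTop :=
    Real.tendsto_exp_atTop.comp tendsto_neg_atBot_atTop
  have h3 : Tendsto (fun x : ℝ => -Real.exp (-x)) atBot atBot :=
    tendsto_neg_atTop_atBot.comp h2
  exact Real.tendsto_exp_atBot.comp h3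

lemma gumbelSF_tendsto_atTop : Tendsto gumbelSF atTop (𝓝 1) := by
  have h2 : Tendsto (fun x : ℝ => Real.exp (-x)) atTop (𝓝 0) :=
    Real.tendsto_exp_atBot.comp tendsto_neg_atTop_atBot
  have h3 : Tendsto (fun x : ℝ => -Real.exp (-x)) atTop (𝓝 0) := by
    simpa using h2.neg
  have := (Real.continuous_exp.tendsto 0).comp h3
  rw [Real.exp_zero] at this
  exact this

/-- The standard Gumbel measure. -/
noncomputable def gumbelM : Measure ℝ := gumbelSF.measure

lemma gumbelM_Iic (x : ℝ) :
    gumbelM (Iic x) = ENNReal.ofReal (Real.exp (-Real.exp (-x))) :=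
by
  have := gumbelSF.measure_Iic gumbelSF_tendsto_atBot x
  simpa [gumbelM, gumbelSF_apply] using this

instance : IsProbabilityMeasure gumbelM := by
  constructor
  have := gumbelSF.measure_univ gumbelSF_tendsto_atBot gumbelSF_tendsto_atTop
  simpa [gumbelM] using this

lemma gumbelM_singleton (t : ℝ) : gumbelM {t} = 0 := by
  have hl : Function.leftLim gumbelSF t = gumbelSF t :=
    leftLim_eq_of_tendsto
      (gumbelSF_continuous.continuousAt.continuousWithinAt)
  have := gumbelSF.measure_singleton t
  simp [gumbelM, this, hl]

lemma gumbelM_Iio (x : ℝ) :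
    gumbelM (Iio x) = ENNReal.ofReal (Real.exp (-Real.exp (-x))) := by
  rw [← Iic_diff_right, measure_diff_null (gumbelM_singleton x), gumbelM_Iic]

lemma gumbelSF_pos (x : ℝ) : 0 < gumbelSF x := Real.exp_pos _

lemma gumbelSF_le_one (x : ℝ) : gumbelSF x ≤ 1 := by
  rw [gumbelSF_apply, ← Real.exp_zero]
  exact Real.exp_le_exp.2 (neg_nonpos.2 (Real.exp_pos _).le)

lemma gumbelM_map : gumbelM.map gumbelSF = volume.restrict (Ioc (0:ℝ) 1) := by
  haveI : IsProbabilityMeasure (gumbelM.map gumbelSF) :=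
    Measure.isProbabilityMeasure_map gumbelSF_continuous.measurable.aemeasurable
  refine Measure.ext_of_Iic _ _ (fun t => ?_)
  rw [Measure.map_apply gumbelSF_continuous.measurable measurableSet_Iic,
    Measure.restrict_apply measurableSet_Iic]
  rcases le_or_gt t 0 with ht0 | ht0
  · have h1 : (gumbelSF ⁻¹' Iic t) = ∅ := by
      ext x; simp only [mem_preimage, mem_Iic, mem_empty_iff_false, iff_false, not_le]
      exact lt_of_le_of_lt ht0 (gumbelSF_pos x)
    have h2 : Iic t ∩ Ioc (0:ℝ) 1 = ∅ := by
      ext x; simp only [mem_inter_iff, mem_Iic, mem_Ioc, mem_empty_iff_false, iff_false]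
      rintro ⟨hx, hx0, -⟩; exact absurd (lt_of_lt_of_le hx0 hx) (not_lt.2 ht0)
    rw [h1, h2]; simp
  rcases lt_or_ge t 1 with ht1 | ht1
  · have hlt : 0 < -Real.log t := by
      simpa using Real.log_neg ht0 ht1
    set s := -Real.log (-Real.log t) with hs
    have h1 : (gumbelSF ⁻¹' Iic t) = Iic s := by
      ext x
      simp only [mem_preimage, mem_Iic, gumbelSF_apply]
      rw [← Real.le_log_iff_exp_le ht0, neg_le, ← Real.log_le_iff_le_exp hlt, hs,
        le_neg]
    have h2 : Iic t ∩ Ioc (0:ℝ) 1 = Ioc 0 t := by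
      ext x
      simp only [mem_inter_iff, mem_Iic, mem_Ioc]
      constructor
      · rintro ⟨h, h0, -⟩; exact ⟨h0, h⟩
      · rintro ⟨h0, h⟩; exact ⟨h, h0, h.trans ht1.le⟩
    rw [h1, h2, gumbelM_Iic, Real.volume_Ioc]
    congr 1
    rw [hs, neg_neg, Real.exp_log hlt, neg_neg, Real.exp_log ht0]
    simp
  · have h1 : (gumbelSF ⁻¹' Iic t) = univ := by
      ext x; simp only [mem_preimage, mem_Iic, mem_univ, iff_true]
      exact (gumbelSF_le_one x).trans ht1
    have h2 : Iic t ∩ Ioc (0:ℝ) 1 = Ioc 0 1 := by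
      rw [inter_eq_right]
      exact fun x hx => le_trans hx.2 ht1
    rw [h1, h2]
    simp [Real.volume_Ioc]

lemma gumbel_lintegral (a : ℝ) (ha : 0 ≤ a) :
    ∫⁻ x, ENNReal.ofReal ((gumbelSF x) ^ a) ∂gumbelM = ENNReal.ofReal (1 / (a + 1)) := by
  have hmeas : Measurable fun u : ℝ => ENNReal.ofReal (u ^ a) :=
    ENNReal.measurable_ofReal.comp (Real.continuous_rpow_const ha).measurable
  have := lintegral_map hmeas gumbelSF_continuous.measurable (μ := gumbelM)
  rw [← this, gumbelM_map]
  have hint : IntegrableOn (fun u : ℝ => u ^ a) (Ioc 0 1) volume := by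
    have := (intervalIntegral.intervalIntegrable_rpow (μ := volume) (a := 0) (b := 1) (r := a)
      (Or.inl ha)).1
    simpa using this
  rw [← ofReal_integral_eq_lintegral_ofReal hint]
  · congr 1
    have h01 : (0:ℝ) ≤ 1 := zero_le_one
    rw [← intervalIntegral.integral_of_le h01]
    rw [integral_rpow (Or.inl (by linarith))]
    rw [Real.one_rpow, Real.zero_rpow (by linarith)]
    ring
  · filter_upwards [self_mem_ae_restrict (measurableSet_Ioc)] with u hu
    exact Real.rpow_nonneg hu.1.le a

/-- The Gumbel-Max trick: if `g 1, …, g n` are i.i.d. standard Gumbel random variables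
(CDF `exp (-exp (-x))`) and `π` lies in the simplex with all entries positive, then the
probability that `log (π k) + g k` is the strict maximum (i.e. the argmax is `k`)
equals `π k`. -/
theorem gumbel_max_trick
    {Ω : Type*} [MeasurableSpace Ω] (μ : Measure Ω) [IsProbabilityMeasure μ]
    (n : ℕ) (π : Fin n → ℝ) (hπpos : ∀ j, 0 < π j) (hπsum : ∑ j, π j = 1)
    (g : Fin n → Ω → ℝ) (hmeas : ∀ j, Measurable (g j))
    (hindep : iIndepFun g μ)
    (hcdf : ∀ j, ∀ x : ℝ,
      μ {ω | g j ω ≤ x} = ENNReal.ofReal (Real.exp (-Real.exp (-x)))) :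
    ∀ k : Fin n,
      μ {ω | ∀ j, j ≠ k → Real.log (π j) + g j ω < Real.log (π k) + g k ω} =
        ENNReal.ofReal (π k) := by
  intro k
  obtain ⟨m, rfl⟩ : ∃ m, n = m + 1 := ⟨n - 1, (Nat.succ_pred_eq_of_pos k.pos).symm⟩
  -- each g j has law gumbelM
  have hγ : ∀ j, μ.map (g j) = gumbelM := by
    intro j
    haveI : IsProbabilityMeasure (μ.map (g j)) :=
      Measure.isProbabilityMeasure_map (hmeas j).aemeasurable
    refine Measure.ext_of_Iic _ _ (fun x => ?_)
    rw [Measure.map_apply (hmeas j) measurableSet_Iic, gumbelM_Iic]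
    exact hcdf j x
  have hpre : ∀ j (s : Set ℝ), MeasurableSet s → μ (g j ⁻¹' s) = gumbelM s := by
    intro j s hs
    rw [← hγ j, Measure.map_apply (hmeas j) hs]
  set G : Ω → (Fin (m + 1) → ℝ) := fun ω j => g j ω with hG
  have hGmeas : Measurable G := measurable_pi_lambda _ hmeas
  -- joint law is the product of Gumbel measures
  have hjoint : μ.map G = Measure.pi (fun _ : Fin (m + 1) => gumbelM) := by
    refine (Measure.pi_eq (μ := fun _ : Fin (m + 1) => gumbelM) (fun s hs => ?_)).symm
    rw [Measure.map_apply hGmeas (MeasurableSet.univ_pi hs)]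
    have hps : G ⁻¹' (univ.pi s) = ⋂ j ∈ Finset.univ, g j ⁻¹' s j := by
      ext ω; simp [hG]
    rw [hps, hindep.measure_inter_preimage_eq_mul Finset.univ (fun i _ => hs i)]
    exact Finset.prod_congr rfl (fun j _ => hpre j (s j) (hs j))
  set c : Fin m → ℝ := fun j' => Real.log (π k) - Real.log (π (k.succAbove j')) with hc
  set A : Set (Fin (m + 1) → ℝ) :=
    {x | ∀ j, j ≠ k → Real.log (π j) + x j < Real.log (π k) + x k} with hA
  have hAmeas : MeasurableSet A := by
    have : A = ⋂ j, ⋂ (_ : j ≠ k),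
        {x : Fin (m + 1) → ℝ | Real.log (π j) + x j < Real.log (π k) + x k} := by
      ext x; simp [hA]
    rw [this]
    exact MeasurableSet.iInter fun j => MeasurableSet.iInter fun _ =>
      measurableSet_lt (measurable_const.add (measurable_pi_apply j))
        (measurable_const.add (measurable_pi_apply k))
  have hμE : μ {ω | ∀ j, j ≠ k → Real.log (π j) + g j ω < Real.log (π k) + g k ω}
      = (μ.map G) A := by
    rw [Measure.map_apply hGmeas hAmeas]
    rfl
  set S : Set (ℝ × (Fin m → ℝ)) := {p | ∀ j', p.2 j' < p.1 + c j'} with hS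
  have hSmeas : MeasurableSet S := by
    have : S = ⋂ j', {p : ℝ × (Fin m → ℝ) | p.2 j' < p.1 + c j'} := by
      ext p; simp [hS]
    rw [this]
    exact MeasurableSet.iInter fun j' =>
      measurableSet_lt (measurable_snd.eval)
        (measurable_fst.add measurable_const)
  have hAS : A = (MeasurableEquiv.piFinSuccAbove (fun _ : Fin (m + 1) => ℝ) k) ⁻¹' S := by
    ext x
    show (∀ j, j ≠ k → Real.log (π j) + x j < Real.log (π k) + x k)
      ↔ (∀ j', x (k.succAbove j') < x k + c j')
    constructor
    · intro h j'
      have := h (k.succAbove j') (Fin.succAbove_ne k j')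
      simp only [hc]; linarith
    · intro h j hj
      obtain ⟨j', rfl⟩ := Fin.exists_succAbove_eq hj
      have := h j'
      simp only [hc] at this; linarith
  have hmp := measurePreserving_piFinSuccAbove (fun _ : Fin (m + 1) => gumbelM) k
  have hpiA : Measure.pi (fun _ : Fin (m + 1) => gumbelM) A
      = (gumbelM.prod (Measure.pi fun _ : Fin m => gumbelM)) S := by
    rw [hAS]
    exact hmp.measure_preimage hSmeas.nullMeasurableSet
  set a : ℝ := (1 - π k) / π k with ha_def
  have hπk1 : π k ≤ 1 := by
    rw [← hπsum]
    exact Finset.single_le_sum (fun j _ => (hπpos j).le) (Finset.mem_univ k)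
  have ha : 0 ≤ a := div_nonneg (by linarith) (hπpos k).le
  have hsum' : ∑ j', π (k.succAbove j') = 1 - π k := by
    have := Fin.sum_univ_succAbove π k
    rw [hπsum] at this
    linarith
  have hsec : ∀ x : ℝ, (Measure.pi fun _ : Fin m => gumbelM) (Prod.mk x ⁻¹' S)
      = ENNReal.ofReal ((gumbelSF x) ^ a) := by
    intro x
    have h1 : (Prod.mk x ⁻¹' S) = Set.pi univ (fun j' => Iio (x + c j')) := by
      ext y; simp [hS]
    rw [h1, Measure.pi_pi]
    simp_rw [gumbelM_Iio]
    rw [← ENNReal.ofReal_prod_of_nonneg (fun _ _ => (Real.exp_pos _).le)]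
    congr 1
    have hterm : ∀ j', Real.exp (-(x + c j'))
        = Real.exp (-x) * (π (k.succAbove j') / π k) := by
      intro j'
      rw [hc]
      have : -(x + (Real.log (π k) - Real.log (π (k.succAbove j'))))
          = -x + (Real.log (π (k.succAbove j')) - Real.log (π k)) := by ring
      rw [this, Real.exp_add, Real.exp_sub, Real.exp_log (hπpos _), Real.exp_log (hπpos _)]
    have hsum2 : ∑ j', -Real.exp (-(x + c j')) = -Real.exp (-x) * a := by
      have : ∑ j', -Real.exp (-(x + c j'))
          = ∑ j', (-(Real.exp (-x) / π k)) * π (k.succAbove j') := by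
        refine Finset.sum_congr rfl fun j' _ => ?_
        rw [hterm j']
        ring
      rw [this, ← Finset.mul_sum, hsum', ha_def]
      field_simp
    calc ∏ j', Real.exp (-Real.exp (-(x + c j')))
        = Real.exp (∑ j', -Real.exp (-(x + c j'))) := (Real.exp_sum _ _).symm
      _ = Real.exp (-Real.exp (-x) * a) := by rw [hsum2]
      _ = (gumbelSF x) ^ a := by rw [gumbelSF_apply, ← Real.exp_mul]
  rw [hμE, hjoint, hpiA, Measure.prod_apply hSmeas]
  calc ∫⁻ x, (Measure.pi fun _ : Fin m => gumbelM) (Prod.mk x ⁻¹' S) ∂gumbelM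
      = ∫⁻ x, ENNReal.ofReal ((gumbelSF x) ^ a) ∂gumbelM := by
        exact lintegral_congr hsec
    _ = ENNReal.ofReal (1 / (a + 1)) := gumbel_lintegral a ha
    _ = ENNReal.ofReal (π k) := by
        congr 1
        rw [ha_def]
        have h0 : π k ≠ 0 := ne_of_gt (hπpos k)
        field_simp
        ring
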